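/- Let d be a prime, F = ℤ/dℤ, ω = exp(2πi/d), and let C ⊆ F^n be a self-orthogonal linear subspace with dim_F C = κ. Define φ_{x,z,v} = |C|^{−1/2}·Σ_{w∈C} ω^{z·w} e_{w+v+x} in ℂ^{F^n}. Let Γ be a transversal of F^n/C^⊥ and V a transversal of C^⊥/C. Then the d^n vectors φ_{x,z,v}, indexed by x ∈ Γ, z ∈ Γ, v ∈ V, form an orthonormal family (hence an orthonormal basis) of ℂ^{F^n}: ⟨φ_{x,z,v}, φ_{x',z',v'}⟩ = 1 if (x,z,v) = (x',z',v') and = 0 otherwise. -/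
import Mathlib

/- STATEMENT 17 (orthonormality of the CSS states): the dⁿ vectors φ_{x,z,v},
   x ∈ Γ, z ∈ Γ, v ∈ V, form an orthonormal family of ℂ^{Fⁿ}. -/

open scoped BigOperators

noncomputable section

/-- Dot product `x·y = Σᵢ xᵢ yᵢ` in `ℤ/dℤ`. -/
def dotp {d n : ℕ} (x y : Fin n → ZMod d) : ZMod d := ∑ i, x i * y i

/-- `C^⊥ = {y : ∀ x ∈ C, x·y = 0}`. -/
def dualSet {d n : ℕ} (C : Set (Fin n → ZMod d)) : Set (Fin n → ZMod d) :=
  {y | ∀ x ∈ C, dotp x y = 0}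

/-- A transversal of `Fⁿ/C^⊥`: contains exactly one element of each coset of `C^⊥`. -/
def IsTransversal {d n : ℕ} (C : Set (Fin n → ZMod d)) (Γ : Set (Fin n → ZMod d)) : Prop :=
  ∀ y : Fin n → ZMod d, ∃! g, g ∈ Γ ∧ y - g ∈ dualSet C

/-- A transversal of `C^⊥/C`: a subset of `C^⊥` containing exactly one element of each
coset of `C` inside `C^⊥`. -/
def IsTransversalIn {d n : ℕ} (C : Set (Fin n → ZMod d)) (V : Set (Fin n → ZMod d)) : Prop :=
  V ⊆ dualSet C ∧ ∀ y ∈ dualSet C, ∃! v, v ∈ V ∧ y - v ∈ C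

/-- `ω = exp(2πi/d)`. -/
def omg (d : ℕ) : ℂ := Complex.exp (2 * Real.pi * Complex.I / d)

/-- The standard basis vector `e_c` of `ℂ^{Fⁿ}`. -/
def stdv {d n : ℕ} (c : Fin n → ZMod d) : (Fin n → ZMod d) → ℂ :=
  fun a => if a = c then 1 else 0

/-- The CSS basis state `φ_{x,z,v} = |C|^{−1/2}·Σ_{w∈C} ω^{z·w} e_{w+v+x}`. -/
def phiv {d n : ℕ} (C : Submodule (ZMod d) (Fin n → ZMod d))
    (x z v : Fin n → ZMod d) : (Fin n → ZMod d) → ℂ :=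
  fun a => (1 / (Real.sqrt (Nat.card C) : ℂ)) *
    ∑ᶠ w ∈ (C : Set (Fin n → ZMod d)), omg d ^ (dotp z w).val * stdv (w + v + x) a

open scoped Classical

lemma dotp_comm {d n : ℕ} (x y : Fin n → ZMod d) : dotp x y = dotp y x := by
  simp [dotp, mul_comm]
lemma dotp_add_right {d n : ℕ} (x y z : Fin n → ZMod d) :
    dotp x (y + z) = dotp x y + dotp x z := by
  simp [dotp, mul_add, Finset.sum_add_distrib]
lemma dotp_sub_right {d n : ℕ} (x y z : Fin n → ZMod d) :
    dotp x (y - z) = dotp x y - dotp x z := by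
  simp [dotp, mul_sub, Finset.sum_sub_distrib]
lemma dotp_sub_left {d n : ℕ} (x y z : Fin n → ZMod d) :
    dotp (x - y) z = dotp x z - dotp y z := by
  simp [dotp, sub_mul, Finset.sum_sub_distrib]
lemma zero_mem_dual {d n : ℕ} (C : Set (Fin n → ZMod d)) :
    (0 : Fin n → ZMod d) ∈ dualSet C := by
  intro w _; simp [dotp]
lemma dual_sub_mem {d n : ℕ} {C : Set (Fin n → ZMod d)} {p q : Fin n → ZMod d}
    (hp : p ∈ dualSet C) (hq : q ∈ dualSet C) : p - q ∈ dualSet C := by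
  intro w hw; rw [dotp_sub_right, hp w hw, hq w hw, sub_zero]
lemma omg_prim (d : ℕ) [NeZero d] : IsPrimitiveRoot (omg d) d := by
  simpa [omg] using Complex.isPrimitiveRoot_exp d (NeZero.ne d)
lemma omg_ne_zero (d : ℕ) : omg d ≠ 0 := Complex.exp_ne_zero _
lemma chi_add {d : ℕ} [NeZero d] (s t : ZMod d) :
    omg d ^ (s + t).val = omg d ^ s.val * omg d ^ t.val := by
  rw [← pow_add, ZMod.val_add]
  conv_rhs => rw [← Nat.div_add_mod (s.val + t.val) d]
  rw [pow_add, pow_mul, (omg_prim d).pow_eq_one, one_pow, one_mul]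
lemma chi_eq_one_iff {d : ℕ} [NeZero d] (s : ZMod d) :
    omg d ^ s.val = 1 ↔ s = 0 := by
  rw [(omg_prim d).pow_eq_one_iff_dvd]
  constructor
  · intro h
    have := Nat.eq_zero_of_dvd_of_lt h (s.val_lt)
    exact (ZMod.val_eq_zero s).1 (by omega)
  · rintro rfl; simp
lemma conj_omg (d : ℕ) : (starRingEnd ℂ) (omg d) = (omg d)⁻¹ := by
  rw [omg, ← Complex.exp_conj, ← Complex.exp_neg]
  congr 1
  simp [map_div₀, Complex.conj_I, map_ofNat]
  ring
lemma conj_omg_pow (d k : ℕ) : (starRingEnd ℂ) (omg d ^ k) = (omg d ^ k)⁻¹ := by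
  rw [map_pow, conj_omg, inv_pow]
lemma chi_sub {d : ℕ} [NeZero d] (s t : ZMod d) :
    omg d ^ (t - s).val * omg d ^ s.val = omg d ^ t.val := by
  rw [← chi_add, sub_add_cancel]
lemma chi_inv_mul {d : ℕ} [NeZero d] (s t : ZMod d) :
    (omg d ^ s.val)⁻¹ * omg d ^ t.val = omg d ^ (t - s).val := by
  rw [← chi_sub s t, mul_comm (omg d ^ (t-s).val), ← mul_assoc,
    inv_mul_cancel₀ (pow_ne_zero _ (omg_ne_zero d)), one_mul]

lemma sum_char {d n : ℕ} [NeZero d] (C : Submodule (ZMod d) (Fin n → ZMod d))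
    (y w₀ : Fin n → ZMod d) (hw₀ : w₀ ∈ C) (hy : dotp y w₀ ≠ 0) :
    ∑ w ∈ (Set.toFinite (C : Set (Fin n → ZMod d))).toFinset,
      omg d ^ (dotp y w).val = 0 := by
  set s := (Set.toFinite (C : Set (Fin n → ZMod d))).toFinset with hs
  have hmem : ∀ w, w ∈ s ↔ w ∈ C := fun w => Set.Finite.mem_toFinset _
  have key : ∑ w ∈ s, omg d ^ (dotp y (w + w₀)).val = ∑ w ∈ s, omg d ^ (dotp y w).val := by
    refine Finset.sum_equiv (Equiv.addRight w₀) ?_ ?_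
    · intro i
      simp only [hmem, Equiv.coe_addRight]
      exact ⟨fun h => C.add_mem h hw₀, fun h => by simpa using C.sub_mem h hw₀⟩
    · intro i _; rfl
  have key2 : ∀ w, omg d ^ (dotp y (w + w₀)).val
      = omg d ^ (dotp y w).val * omg d ^ (dotp y w₀).val := by
    intro w; rw [dotp_add_right, chi_add]
  simp_rw [key2, ← Finset.sum_mul] at key
  have hne : omg d ^ (dotp y w₀).val ≠ 1 := fun h => hy ((chi_eq_one_iff _).1 h)
  have h0 : (∑ w ∈ s, omg d ^ (dotp y w).val) * (omg d ^ (dotp y w₀).val - 1) = 0 := by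
    rw [mul_sub, key, mul_one, sub_self]
  rcases mul_eq_zero.1 h0 with h | h
  · exact h
  · exact absurd (sub_eq_zero.1 h) hne

lemma phiv_apply {d n : ℕ} [NeZero d] (C : Submodule (ZMod d) (Fin n → ZMod d))
    (x z v a : Fin n → ZMod d) :
    phiv C x z v a = (1 / (Real.sqrt (Nat.card C) : ℂ)) *
      (if a - v - x ∈ C then omg d ^ (dotp z (a - v - x)).val else 0) := by
  rw [phiv]
  congr 1
  rw [← Set.Finite.coe_toFinset (Set.toFinite (C : Set (Fin n → ZMod d))), finsum_mem_coe_finset]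
  have hstep : ∀ w, omg d ^ (dotp z w).val * stdv (w + v + x) a
      = if w = a - v - x then omg d ^ (dotp z w).val else 0 := by
    intro w
    have hiff : a = w + v + x ↔ w = a - v - x := by
      constructor
      · intro h; subst h; abel
      · intro h; subst h; abel
    simp [stdv, hiff]
  simp_rw [hstep]
  rw [Finset.sum_ite_eq' ]
  simp only [Set.Finite.mem_toFinset, SetLike.mem_coe]

theorem stmt_17 (d : ℕ) [NeZero d] (hd : d.Prime) (n κ : ℕ)
    (C : Submodule (ZMod d) (Fin n → ZMod d))
    (hC : (C : Set (Fin n → ZMod d)) ⊆ dualSet (C : Set (Fin n → ZMod d)))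
    (hκ : Module.finrank (ZMod d) C = κ)
    (Γ : Set (Fin n → ZMod d)) (hΓ : IsTransversal (C : Set (Fin n → ZMod d)) Γ)
    (V : Set (Fin n → ZMod d)) (hV : IsTransversalIn (C : Set (Fin n → ZMod d)) V) :
    ∀ x ∈ Γ, ∀ z ∈ Γ, ∀ v ∈ V, ∀ x' ∈ Γ, ∀ z' ∈ Γ, ∀ v' ∈ V,
      (∑ a : Fin n → ZMod d, starRingEnd ℂ (phiv C x z v a) * phiv C x' z' v' a) =
        if x = x' ∧ z = z' ∧ v = v' then 1 else 0 := by
  intro x hx z hz v hv x' hx' z' hz' v' hv'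
  set s : Finset (Fin n → ZMod d) := (Set.toFinite (C : Set (Fin n → ZMod d))).toFinset
    with hsdef
  have hmem : ∀ w, w ∈ s ↔ w ∈ C := fun w => Set.Finite.mem_toFinset _
  have hcard : Nat.card C = s.card := by
    rw [show (Nat.card C) = Nat.card (C : Set (Fin n → ZMod d)) from rfl,
      Nat.card_coe_set_eq, Set.ncard_eq_toFinset_card _ (Set.toFinite _)]
  have hspos : 0 < s.card := Finset.card_pos.2 ⟨0, (hmem 0).2 C.zero_mem⟩
  have hcc : (starRingEnd ℂ) (1 / (Real.sqrt (Nat.card C) : ℂ)) *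
      (1 / (Real.sqrt (Nat.card C) : ℂ)) = 1 / (s.card : ℂ) := by
    rw [map_div₀, map_one, Complex.conj_ofReal, div_mul_div_comm, one_mul]
    congr 1
    rw [← Complex.ofReal_mul, Real.mul_self_sqrt (Nat.cast_nonneg _)]
    exact_mod_cast congrArg (Nat.cast : ℕ → ℂ) hcard
  have hterm : ∀ a : Fin n → ZMod d,
      (starRingEnd ℂ) (phiv C x z v a) * phiv C x' z' v' a
      = ((starRingEnd ℂ) (1 / (Real.sqrt (Nat.card C) : ℂ)) *
          (1 / (Real.sqrt (Nat.card C) : ℂ))) *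
        ((if a - v - x ∈ C then ((omg d ^ (dotp z (a - v - x)).val)⁻¹ : ℂ) else 0) *
         (if a - v' - x' ∈ C then omg d ^ (dotp z' (a - v' - x')).val else 0)) := by
    intro a
    rw [phiv_apply, phiv_apply, map_mul, apply_ite (starRingEnd ℂ), map_zero, conj_omg_pow]
    ring
  rw [Finset.sum_congr rfl (fun a _ => hterm a), ← Finset.mul_sum, hcc]
  by_cases hxx : x = x'
  · subst hxx
    by_cases hvv : v = v'
    · subst hvv
      have hsum : (∑ a : Fin n → ZMod d,
          (if a - v - x ∈ C then ((omg d ^ (dotp z (a - v - x)).val)⁻¹ : ℂ) else 0) *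
          (if a - v - x ∈ C then omg d ^ (dotp z' (a - v - x)).val else 0))
          = ∑ w ∈ s, omg d ^ (dotp (z' - z) w).val := by
        have h1 : ∀ a : Fin n → ZMod d,
            (if a - v - x ∈ C then ((omg d ^ (dotp z (a - v - x)).val)⁻¹ : ℂ) else 0) *
            (if a - v - x ∈ C then omg d ^ (dotp z' (a - v - x)).val else 0)
            = (fun b => if b ∈ C then omg d ^ (dotp (z' - z) b).val else 0) (a - (v + x)) := by
          intro a
          rw [show a - v - x = a - (v + x) from sub_sub a v x]
          by_cases h : a - (v + x) ∈ C
          · simp only [if_pos h]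
            rw [dotp_sub_left]
            exact chi_inv_mul _ _
          · simp [h]
        rw [Finset.sum_congr rfl (fun a _ => h1 a)]
        rw [Fintype.sum_equiv (Equiv.subRight (v + x))
          (fun a => (fun b => if b ∈ C then omg d ^ (dotp (z' - z) b).val else 0) (a - (v + x)))
          (fun b => if b ∈ C then omg d ^ (dotp (z' - z) b).val else 0) (fun a => rfl)]
        simp only [← hmem]
        rw [Finset.sum_ite_mem, Finset.univ_inter]
      rw [hsum]
      by_cases hzz : z = z'
      · subst hzz
        have : ∀ w ∈ s, omg d ^ (dotp (z - z) w).val = 1 := by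
          intro w _; simp [dotp]
        rw [Finset.sum_congr rfl this, Finset.sum_const, nsmul_eq_mul, mul_one,
          if_pos ⟨rfl, rfl, rfl⟩]
        rw [one_div, inv_mul_cancel₀]
        exact_mod_cast Nat.pos_iff_ne_zero.1 hspos
      · rw [if_neg (by tauto)]
        have hnd : z' - z ∉ dualSet (C : Set (Fin n → ZMod d)) := by
          intro hmemdual
          apply hzz
          obtain ⟨g, hg, huniq⟩ := hΓ z'
          have e1 := huniq z' ⟨hz', by simpa using zero_mem_dual (C : Set (Fin n → ZMod d))⟩
          have e2 := huniq z ⟨hz, hmemdual⟩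
          rw [e2, e1]
        have : ∃ w₀ ∈ (C : Set (Fin n → ZMod d)), dotp w₀ (z' - z) ≠ 0 := by
          by_contra hcon
          push_neg at hcon
          exact hnd hcon
        obtain ⟨w₀, hw₀C, hw₀⟩ := this
        have hchar := sum_char C (z' - z) w₀ hw₀C (by rw [dotp_comm]; exact hw₀)
        rw [← hsdef] at hchar
        rw [hchar, mul_zero]
    · rw [if_neg (by tauto)]
      rw [Finset.sum_eq_zero, mul_zero]
      intro a _
      by_cases h1 : a - v - x ∈ C
      · by_cases h2 : a - v' - x ∈ C
        · exfalso
          apply hvv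
          obtain ⟨t, ht, huniq⟩ := hV.2 v' (hV.1 hv')
          have e1 := huniq v' ⟨hv', by simpa using C.zero_mem⟩
          have e2 := huniq v ⟨hv, by
            have hu := C.sub_mem h1 h2
            have : (a - v - x) - (a - v' - x) = v' - v := by abel
            rw [this] at hu
            exact hu⟩
          rw [e2, e1]
        · rw [if_neg h2, mul_zero]
      · rw [if_neg h1, zero_mul]
  · rw [if_neg (by tauto)]
    rw [Finset.sum_eq_zero, mul_zero]
    intro a _
    by_cases h1 : a - v - x ∈ C
    · by_cases h2 : a - v' - x' ∈ C
      · exfalso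
        apply hxx
        have hdmem : x' - x ∈ dualSet (C : Set (Fin n → ZMod d)) := by
          have hu : ((a - v - x) - (a - v' - x')) - (v' - v) = x' - x := by abel
          rw [← hu]
          exact dual_sub_mem (hC (SetLike.mem_coe.2 (C.sub_mem h1 h2)))
            (dual_sub_mem (hV.1 hv') (hV.1 hv))
        obtain ⟨g, hg, huniq⟩ := hΓ x'
        have e1 := huniq x' ⟨hx', by simpa using zero_mem_dual (C : Set (Fin n → ZMod d))⟩
        have e2 := huniq x ⟨hx, hdmem⟩
        rw [e2, e1]
      · rw [if_neg h2, mul_zero]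
    · rw [if_neg h1, zero_mul]

end
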